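/- For all real ε > 0, δ ∈ (0,1), and real numbers a, b with a ≥ b + (1/ε)·ln(1/δ), we have exp(ε·a) / (exp(ε·(a+1)) + exp(ε·(b+1))) ≥ (1−δ)·e^{−ε}·( exp(ε·a) / (exp(ε·a)+exp(ε·b)) ) and moreover exp(ε·a)/(exp(ε·a)+exp(ε·b)) ≥ 1−δ. -/

import Mathlib

theorem stmt3 (ε δ a b : ℝ) (hε : 0 < ε) (hδ0 : 0 < δ) (hδ1 : δ < 1)
    (hab : a ≥ b + (1 / ε) * Real.log (1 / δ)) :
    Real.exp (ε * a) / (Real.exp (ε * (a + 1)) + Real.exp (ε * (b + 1))) ≥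
      (1 - δ) * Real.exp (-ε) *
        (Real.exp (ε * a) / (Real.exp (ε * a) + Real.exp (ε * b))) ∧
    Real.exp (ε * a) / (Real.exp (ε * a) + Real.exp (ε * b)) ≥ 1 - δ := by
  have hA : 0 < Real.exp (ε * a) := Real.exp_pos _
  have hB : 0 < Real.exp (ε * b) := Real.exp_pos _
  have hS : 0 < Real.exp (ε * a) + Real.exp (ε * b) := by positivity
  have hkey : Real.exp (ε * b) ≤ δ * Real.exp (ε * a) := by
    have h1 : ε * b + Real.log (1 / δ) ≤ ε * a := by
      have := mul_le_mul_of_nonneg_left hab hε.le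
      rw [mul_add] at this
      calc ε * b + Real.log (1 / δ) = ε * (b + 1/ε * Real.log (1/δ)) := by
            field_simp
        _ ≤ ε * a := by nlinarith
    have := Real.exp_le_exp.mpr h1
    rw [Real.exp_add, Real.exp_log (by positivity)] at this
    calc Real.exp (ε * b) = δ * (Real.exp (ε * b) * (1/δ)) := by field_simp
      _ ≤ δ * Real.exp (ε * a) := by nlinarith
  have hp : Real.exp (ε * a) / (Real.exp (ε * a) + Real.exp (ε * b)) ≥ 1 - δ := by
    rw [ge_iff_le, le_div_iff₀ hS]
    nlinarith
  refine ⟨?_, hp⟩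
  have heq : Real.exp (ε * a) / (Real.exp (ε * (a + 1)) + Real.exp (ε * (b + 1))) =
      Real.exp (-ε) * (Real.exp (ε * a) / (Real.exp (ε * a) + Real.exp (ε * b))) := by
    rw [mul_add, mul_add, mul_one, Real.exp_add, Real.exp_add (ε*b)]
    rw [Real.exp_neg]
    field_simp
  rw [heq]
  have hfrac : 0 ≤ Real.exp (ε * a) / (Real.exp (ε * a) + Real.exp (ε * b)) := by positivity
  nlinarith [Real.exp_pos (-ε), mul_nonneg hδ0.le (mul_nonneg (Real.exp_pos (-ε)).le hfrac)]
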